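/- Let E be a compact metric space, m and (m_j) Borel probability measures on E, and for each j let γ_j be a Borel probability measure on E × E with first marginal m and second marginal m_j, such that ∫_{E×E} d(x,y)² dγ_j(x,y) → 0 as j → ∞. Let ρ : E × E → [0,∞) be bounded and Borel measurable with ∫ ρ d(m ⊗ m) = 1, and set π := ρ·(m ⊗ m). For each j define π_j as the pushforward under the map (x₁,x₂,x₃,x₄) ↦ (x₂,x₄) of the measure ρ(x₁,x₃)·(γ_j ⊗ γ_j) on E⁴, where γ_j ⊗ γ_j is the product of γ_j in the variables (x₁,x₂) with γ_j in the variables (x₃,x₄). Then each π_j is a Borel probability measure on E × E which is absolutely continuous with respect to m_j ⊗ m_j, and π_j → π weakly as j → ∞. -/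

import Mathlib

open MeasureTheory Filter Topology

/-- The plan obtained by gluing a plan with density `ρ` w.r.t. `m ⊗ m` along a coupling
`γ` of `m` with `m_j`: the pushforward under `(x₁,x₂,x₃,x₄) ↦ (x₂,x₄)` of the measure
`ρ(x₁,x₃)·(γ ⊗ γ)` on `E⁴` (pairing `γ` in `(x₁,x₂)` with `γ` in `(x₃,x₄)`). -/
noncomputable def gluedPlan {E : Type*} [MeasurableSpace E]
    (γ : Measure (E × E)) (ρ : E × E → ℝ) : Measure (E × E) :=
  ((γ.prod γ).withDensity fun z => ENNReal.ofReal (ρ (z.1.1, z.2.1))).map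
    fun z => (z.1.2, z.2.2)


open scoped NNReal ENNReal

lemma aux_pm {E : Type*} [MeasurableSpace E] :
    Measurable fun z : (E × E) × (E × E) => (z.1.1, z.2.1) :=
  (measurable_fst.fst).prodMk (measurable_snd.fst)

lemma aux_qm {E : Type*} [MeasurableSpace E] :
    Measurable fun z : (E × E) × (E × E) => (z.1.2, z.2.2) :=
  (measurable_fst.snd).prodMk (measurable_snd.snd)

lemma aux_int_of_bounded {α : Type*} [MeasurableSpace α] (μ : Measure α) [IsFiniteMeasure μ]
    {g : α → ℝ} (hm : AEStronglyMeasurable g μ) (C : ℝ) (hb : ∀ x, |g x| ≤ C) :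
    Integrable g μ :=
  Integrable.mono' (integrable_const C) hm
    (Filter.Eventually.of_forall fun x => by simpa [Real.norm_eq_abs] using hb x)

lemma aux_wd_integral {α : Type*} [MeasurableSpace α] (μ : Measure α)
    (ρ : α → ℝ) (hρm : Measurable ρ) (hρ0 : ∀ z, 0 ≤ ρ z) (f : α → ℝ) :
    ∫ z, f z ∂(μ.withDensity fun z => ENNReal.ofReal (ρ z)) = ∫ z, ρ z * f z ∂μ := by
  have h1 : (fun z => ENNReal.ofReal (ρ z))
      = fun z => (((fun w => (ρ w).toNNReal) z : ℝ≥0) : ℝ≥0∞) := rfl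
  rw [h1, integral_withDensity_eq_integral_smul hρm.real_toNNReal f]
  congr 1
  ext z
  simp [NNReal.smul_def, Real.coe_toNNReal _ (hρ0 z)]

/-- Let `E` be a compact metric space, `γ_j` couplings of `m` with
`m_j` whose quadratic cost `∫ d(x,y)² dγ_j` tends to `0`, and `ρ` a bounded measurable
probability density w.r.t. `m ⊗ m`, `π := ρ·(m ⊗ m)`.  Then the glued plans
`π_j := gluedPlan (γ_j) ρ` are Borel probability measures on `E × E`, absolutely
continuous w.r.t. `m_j ⊗ m_j`, and `π_j → π` weakly. -/
theorem stmt_18 {E : Type*} [MetricSpace E] [CompactSpace E]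
    [MeasurableSpace E] [BorelSpace E]
    (m : Measure E) (mj : ℕ → Measure E) (γ : ℕ → Measure (E × E))
    [IsProbabilityMeasure m] [∀ j, IsProbabilityMeasure (mj j)]
    [∀ j, IsProbabilityMeasure (γ j)]
    (hγ1 : ∀ j, (γ j).map Prod.fst = m) (hγ2 : ∀ j, (γ j).map Prod.snd = mj j)
    (hcost : Tendsto (fun j => ∫ z : E × E, dist z.1 z.2 ^ 2 ∂(γ j)) atTop (𝓝 0))
    (ρ : E × E → ℝ) (hρm : Measurable ρ) (hρ0 : ∀ z, 0 ≤ ρ z) (hρb : ∃ C, ∀ z, ρ z ≤ C)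
    (hρ1 : ∫⁻ z, ENNReal.ofReal (ρ z) ∂(m.prod m) = 1) :
    (∀ j, IsProbabilityMeasure (gluedPlan (γ j) ρ)) ∧
    (∀ j, gluedPlan (γ j) ρ ≪ (mj j).prod (mj j)) ∧
    (∀ f : E × E → ℝ, Continuous f → (∃ C, ∀ z, |f z| ≤ C) →
      Tendsto (fun j => ∫ z, f z ∂(gluedPlan (γ j) ρ)) atTop
        (𝓝 (∫ z, f z ∂((m.prod m).withDensity fun z => ENNReal.ofReal (ρ z))))) := by
    -- pushforward identities
  have hA : ∀ j, ((γ j).prod (γ j)).map (fun z : (E × E) × (E × E) => (z.1.1, z.2.1))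
      = m.prod m := by
    intro j
    have he : (fun z : (E × E) × (E × E) => (z.1.1, z.2.1))
        = Prod.map (Prod.fst : E × E → E) (Prod.fst : E × E → E) := rfl
    rw [he, ← Measure.map_prod_map _ _ measurable_fst measurable_fst, hγ1]
  have hB : ∀ j, ((γ j).prod (γ j)).map (fun z : (E × E) × (E × E) => (z.1.2, z.2.2))
      = (mj j).prod (mj j) := by
    intro j
    have he : (fun z : (E × E) × (E × E) => (z.1.2, z.2.2))
        = Prod.map (Prod.snd : E × E → E) (Prod.snd : E × E → E) := rfl
    rw [he, ← Measure.map_prod_map _ _ measurable_snd measurable_snd, hγ2]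
  have h1 : ∀ j, IsProbabilityMeasure (gluedPlan (γ j) ρ) := by
    intro j
    constructor
    rw [gluedPlan, Measure.map_apply aux_qm MeasurableSet.univ, Set.preimage_univ,
      withDensity_apply _ MeasurableSet.univ, setLIntegral_univ]
    rw [← hA j, lintegral_map hρm.ennreal_ofReal aux_pm] at hρ1
    exact hρ1
  refine ⟨h1, fun j => ?_, ?_⟩
  · rw [← hB j]
    exact (withDensity_absolutelyContinuous _ _).map aux_qm
  -- Part 3: weak convergence
  rintro f hf ⟨Cf, hCf⟩
  obtain ⟨C, hC⟩ := hρb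
  set C1 : ℝ := max C 0 + 1 with hC1def
  have hC1pos : (0:ℝ) < C1 := by positivity
  have hρle : ∀ z, ρ z ≤ C1 := fun z => (hC z).trans (by simp only [hC1def]; linarith [le_max_left C (0:ℝ)])
  have hρabs : ∀ z, |ρ z| ≤ C1 := fun z => abs_le.mpr ⟨by linarith [hρ0 z], hρle z⟩
  set Cf1 : ℝ := max Cf 0 + 1 with hCf1def
  have hCf1pos : (0:ℝ) < Cf1 := by positivity
  have hfle : ∀ z, |f z| ≤ Cf1 := fun z => (hCf z).trans (by simp only [hCf1def]; linarith [le_max_left Cf (0:ℝ)])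
  -- integral formulas
  have hglued : ∀ j, ∫ z, f z ∂(gluedPlan (γ j) ρ)
      = ∫ z : (E × E) × (E × E), ρ (z.1.1, z.2.1) * f (z.1.2, z.2.2) ∂((γ j).prod (γ j)) := by
    intro j
    rw [gluedPlan, integral_map aux_qm.aemeasurable hf.aestronglyMeasurable,
      aux_wd_integral _ (fun z : (E × E) × (E × E) => ρ (z.1.1, z.2.1)) (hρm.comp aux_pm) (fun z => hρ0 _)
        (fun z : (E × E) × (E × E) => f (z.1.2, z.2.2))]
  have hπ : ∫ z, f z ∂((m.prod m).withDensity fun z => ENNReal.ofReal (ρ z))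
      = ∫ z, ρ z * f z ∂(m.prod m) := aux_wd_integral _ _ hρm hρ0 f
  have hπj : ∀ j, ∫ z, ρ z * f z ∂(m.prod m)
      = ∫ z : (E × E) × (E × E), ρ (z.1.1, z.2.1) * f (z.1.1, z.2.1) ∂((γ j).prod (γ j)) := by
    intro j
    rw [← hA j, integral_map aux_pm.aemeasurable
      (f := fun z => ρ z * f z) (hρm.mul hf.measurable).aestronglyMeasurable]
  -- integrability
  have hint1 : ∀ j, Integrable
      (fun z : (E × E) × (E × E) => ρ (z.1.1, z.2.1) * f (z.1.2, z.2.2)) ((γ j).prod (γ j)) := by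
    intro j
    refine aux_int_of_bounded _ ((hρm.comp aux_pm).mul
      (hf.measurable.comp aux_qm)).aestronglyMeasurable (C1 * Cf1) (fun z => ?_)
    rw [abs_mul]
    exact mul_le_mul (hρabs _) (hfle _) (abs_nonneg _) hC1pos.le
  have hint2 : ∀ j, Integrable
      (fun z : (E × E) × (E × E) => ρ (z.1.1, z.2.1) * f (z.1.1, z.2.1)) ((γ j).prod (γ j)) := by
    intro j
    refine aux_int_of_bounded _ ((hρm.comp aux_pm).mul
      (hf.measurable.comp aux_pm)).aestronglyMeasurable (C1 * Cf1) (fun z => ?_)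
    rw [abs_mul]
    exact mul_le_mul (hρabs _) (hfle _) (abs_nonneg _) hC1pos.le
  set D : ℕ → ℝ := fun j =>
    ∫ z : (E × E) × (E × E), |f (z.1.2, z.2.2) - f (z.1.1, z.2.1)| ∂((γ j).prod (γ j)) with hDdef
  have hcontD : Continuous fun z : (E × E) × (E × E) => |f (z.1.2, z.2.2) - f (z.1.1, z.2.1)| :=
    ((hf.comp ((continuous_fst.snd).prodMk (continuous_snd.snd))).sub
      (hf.comp ((continuous_fst.fst).prodMk (continuous_snd.fst)))).abs
  have hintD : ∀ j, Integrable
      (fun z : (E × E) × (E × E) => |f (z.1.2, z.2.2) - f (z.1.1, z.2.1)|) ((γ j).prod (γ j)) := by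
    intro j
    refine aux_int_of_bounded _ hcontD.aestronglyMeasurable (2 * Cf1) (fun z => ?_)
    rw [abs_abs]
    calc |f (z.1.2, z.2.2) - f (z.1.1, z.2.1)| ≤ |f (z.1.2, z.2.2)| + |f (z.1.1, z.2.1)| :=
          abs_sub _ _
      _ ≤ 2 * Cf1 := by linarith [hfle (z.1.2, z.2.2), hfle (z.1.1, z.2.1)]
  have hDnonneg : ∀ j, 0 ≤ D j := fun j => integral_nonneg fun z => abs_nonneg _
  -- key difference bound
  have hdiffle : ∀ j, |(∫ z, f z ∂(gluedPlan (γ j) ρ))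
      - ∫ z, f z ∂((m.prod m).withDensity fun z => ENNReal.ofReal (ρ z))| ≤ C1 * D j := by
    intro j
    rw [hglued j, hπ, hπj j, ← integral_sub (hint1 j) (hint2 j)]
    have habs : |∫ z : (E × E) × (E × E), (ρ (z.1.1, z.2.1) * f (z.1.2, z.2.2)
            - ρ (z.1.1, z.2.1) * f (z.1.1, z.2.1)) ∂((γ j).prod (γ j))|
        ≤ ∫ z : (E × E) × (E × E), |ρ (z.1.1, z.2.1) * f (z.1.2, z.2.2)
            - ρ (z.1.1, z.2.1) * f (z.1.1, z.2.1)| ∂((γ j).prod (γ j)) := by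
      have h := MeasureTheory.norm_integral_le_integral_norm (μ := (γ j).prod (γ j))
        (fun z : (E × E) × (E × E) => ρ (z.1.1, z.2.1) * f (z.1.2, z.2.2)
          - ρ (z.1.1, z.2.1) * f (z.1.1, z.2.1))
      simpa [Real.norm_eq_abs] using h
    calc |∫ z : (E × E) × (E × E), (ρ (z.1.1, z.2.1) * f (z.1.2, z.2.2)
            - ρ (z.1.1, z.2.1) * f (z.1.1, z.2.1)) ∂((γ j).prod (γ j))|
        ≤ ∫ z : (E × E) × (E × E), |ρ (z.1.1, z.2.1) * f (z.1.2, z.2.2)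
            - ρ (z.1.1, z.2.1) * f (z.1.1, z.2.1)| ∂((γ j).prod (γ j)) :=
          habs
      _ ≤ ∫ z : (E × E) × (E × E), C1 * |f (z.1.2, z.2.2) - f (z.1.1, z.2.1)|
            ∂((γ j).prod (γ j)) := by
          refine integral_mono ((hint1 j).sub (hint2 j)).abs ((hintD j).const_mul C1) (fun z => ?_)
          rw [← mul_sub, abs_mul]
          exact mul_le_mul_of_nonneg_right (hρabs _) (abs_nonneg _)
      _ = C1 * D j := integral_const_mul C1 _
  -- D tends to 0
  have hDto : Tendsto D atTop (𝓝 0) := by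
    rw [Metric.tendsto_atTop]
    intro ε hε
    obtain ⟨δ, hδpos, hδ⟩ := Metric.uniformContinuous_iff.mp
      (CompactSpace.uniformContinuous_of_continuous hf) (ε / 2) (by linarith)
    set K : ℝ := 4 * Cf1 / δ ^ 2 with hKdef
    have hKpos : (0:ℝ) < K := by positivity
    obtain ⟨N, hN⟩ := Metric.tendsto_atTop.mp hcost (ε / 2 / K) (by positivity)
    refine ⟨N, fun n hn => ?_⟩
    have hcn : |∫ z : E × E, dist z.1 z.2 ^ 2 ∂(γ n)| < ε / 2 / K := by
      have := hN n hn; rwa [Real.dist_eq, sub_zero] at this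
    rw [Real.dist_eq, sub_zero, abs_of_nonneg (hDnonneg n)]
    -- bad set
    set A : Set (E × E) := {w | δ ≤ dist w.1 w.2} with hAdef
    have hAm : MeasurableSet A :=
      (isClosed_le continuous_const (continuous_fst.dist continuous_snd)).measurableSet
    set S1 : Set ((E × E) × (E × E)) := Prod.fst ⁻¹' A with hS1def
    set S2 : Set ((E × E) × (E × E)) := Prod.snd ⁻¹' A with hS2def
    have hBm : MeasurableSet (S1 ∪ S2) :=
      (hAm.preimage measurable_fst).union (hAm.preimage measurable_snd)
    -- Markov
    have hgint : Integrable (fun w : E × E => dist w.1 w.2 ^ 2) (γ n) := by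
      obtain ⟨M, hM⟩ := (isCompact_univ : IsCompact (Set.univ : Set (E × E))).exists_bound_of_continuousOn
        ((continuous_fst.dist continuous_snd).pow 2).continuousOn
      exact aux_int_of_bounded _ ((continuous_fst.dist continuous_snd).pow 2).aestronglyMeasurable
        M (fun w => by simpa [Real.norm_eq_abs] using hM w (Set.mem_univ w))
    have hmar := mul_meas_ge_le_integral_of_nonneg
      (Filter.Eventually.of_forall fun w : E × E => sq_nonneg (dist w.1 w.2)) hgint (δ ^ 2)
    have hAsub : A ⊆ {w : E × E | δ ^ 2 ≤ dist w.1 w.2 ^ 2} :=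
      fun w hw => pow_le_pow_left₀ hδpos.le hw 2
    have hγA : ((γ n) A).toReal ≤ (∫ z : E × E, dist z.1 z.2 ^ 2 ∂(γ n)) / δ ^ 2 := by
      have h1 : ((γ n) A).toReal ≤ ((γ n) {w : E × E | δ ^ 2 ≤ dist w.1 w.2 ^ 2}).toReal :=
        ENNReal.toReal_mono (measure_ne_top _ _) (measure_mono hAsub)
      rw [le_div_iff₀ (by positivity)]
      calc ((γ n) A).toReal * δ ^ 2
          ≤ ((γ n) {w : E × E | δ ^ 2 ≤ dist w.1 w.2 ^ 2}).toReal * δ ^ 2 := by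
            exact mul_le_mul_of_nonneg_right h1 (by positivity)
        _ ≤ _ := by rw [mul_comm]; exact hmar
    have hS1m : ((γ n).prod (γ n)) S1 = (γ n) A := by
      rw [hS1def, ← Measure.map_apply measurable_fst hAm, Measure.map_fst_prod, measure_univ,
        one_smul]
    have hS2m : ((γ n).prod (γ n)) S2 = (γ n) A := by
      rw [hS2def, ← Measure.map_apply measurable_snd hAm, Measure.map_snd_prod, measure_univ,
        one_smul]
    have hBbound : (((γ n).prod (γ n)) (S1 ∪ S2)).toReal ≤ 2 * ((γ n) A).toReal := by
      have h1 : ((γ n).prod (γ n)) (S1 ∪ S2) ≤ (γ n) A + (γ n) A := by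
        calc ((γ n).prod (γ n)) (S1 ∪ S2) ≤ ((γ n).prod (γ n)) S1 + ((γ n).prod (γ n)) S2 :=
              measure_union_le _ _
          _ = (γ n) A + (γ n) A := by rw [hS1m, hS2m]
      calc (((γ n).prod (γ n)) (S1 ∪ S2)).toReal ≤ ((γ n) A + (γ n) A).toReal :=
            ENNReal.toReal_mono (ENNReal.add_ne_top.mpr ⟨measure_ne_top _ _, measure_ne_top _ _⟩) h1
        _ = 2 * ((γ n) A).toReal := by
            rw [ENNReal.toReal_add (measure_ne_top _ _) (measure_ne_top _ _)]; ring
    -- splitting the integral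
    have hsplit : D n = (∫ z in S1 ∪ S2, |f (z.1.2, z.2.2) - f (z.1.1, z.2.1)| ∂((γ n).prod (γ n)))
        + ∫ z in (S1 ∪ S2)ᶜ, |f (z.1.2, z.2.2) - f (z.1.1, z.2.1)| ∂((γ n).prod (γ n)) :=
      (integral_add_compl hBm (hintD n)).symm
    have hpart1 : (∫ z in S1 ∪ S2, |f (z.1.2, z.2.2) - f (z.1.1, z.2.1)| ∂((γ n).prod (γ n)))
        ≤ (((γ n).prod (γ n)) (S1 ∪ S2)).toReal * (2 * Cf1) := by
      have hb : ∀ z ∈ S1 ∪ S2, |f (z.1.2, z.2.2) - f (z.1.1, z.2.1)| ≤ 2 * Cf1 := by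
        intro z _
        calc |f (z.1.2, z.2.2) - f (z.1.1, z.2.1)| ≤ |f (z.1.2, z.2.2)| + |f (z.1.1, z.2.1)| :=
              abs_sub _ _
          _ ≤ 2 * Cf1 := by linarith [hfle (z.1.2, z.2.2), hfle (z.1.1, z.2.1)]
      calc (∫ z in S1 ∪ S2, |f (z.1.2, z.2.2) - f (z.1.1, z.2.1)| ∂((γ n).prod (γ n)))
          ≤ ∫ _ in S1 ∪ S2, (2 * Cf1) ∂((γ n).prod (γ n)) :=
            setIntegral_mono_on (hintD n).integrableOn
              (integrableOn_const (measure_ne_top _ _)) hBm hb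
        _ = (((γ n).prod (γ n)) (S1 ∪ S2)).toReal * (2 * Cf1) := by
            rw [setIntegral_const, smul_eq_mul, measureReal_def]
    have hpart2 : (∫ z in (S1 ∪ S2)ᶜ, |f (z.1.2, z.2.2) - f (z.1.1, z.2.1)| ∂((γ n).prod (γ n)))
        ≤ ε / 2 := by
      have hb : ∀ z ∈ (S1 ∪ S2)ᶜ, |f (z.1.2, z.2.2) - f (z.1.1, z.2.1)| ≤ ε / 2 := by
        intro z hz
        rw [Set.mem_compl_iff, Set.mem_union] at hz
        push_neg at hz
        obtain ⟨hz1, hz2⟩ := hz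
        rw [hS1def, Set.mem_preimage, hAdef, Set.mem_setOf_eq, not_le] at hz1
        rw [hS2def, Set.mem_preimage, hAdef, Set.mem_setOf_eq, not_le] at hz2
        have hdq : dist ((z.1.2, z.2.2) : E × E) (z.1.1, z.2.1) < δ := by
          rw [Prod.dist_eq]
          exact max_lt (by rwa [dist_comm]) (by rwa [dist_comm])
        have := hδ hdq
        rw [Real.dist_eq] at this
        exact this.le
      calc (∫ z in (S1 ∪ S2)ᶜ, |f (z.1.2, z.2.2) - f (z.1.1, z.2.1)| ∂((γ n).prod (γ n)))
          ≤ ∫ _ in (S1 ∪ S2)ᶜ, (ε / 2) ∂((γ n).prod (γ n)) :=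
            setIntegral_mono_on (hintD n).integrableOn
              (integrableOn_const (measure_ne_top _ _)) hBm.compl hb
        _ = (((γ n).prod (γ n)) (S1 ∪ S2)ᶜ).toReal * (ε / 2) := by
            rw [setIntegral_const, smul_eq_mul, measureReal_def]
        _ ≤ 1 * (ε / 2) := by
            refine mul_le_mul_of_nonneg_right ?_ (by linarith)
            calc (((γ n).prod (γ n)) (S1 ∪ S2)ᶜ).toReal
                ≤ (((γ n).prod (γ n)) Set.univ).toReal :=
                  ENNReal.toReal_mono (measure_ne_top _ _) (measure_mono (Set.subset_univ _))
              _ = 1 := by rw [measure_univ, ENNReal.toReal_one]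
        _ = ε / 2 := one_mul _
    have hcost_nonneg : (0:ℝ) ≤ ∫ z : E × E, dist z.1 z.2 ^ 2 ∂(γ n) :=
      integral_nonneg fun z => sq_nonneg _
    calc D n ≤ (((γ n).prod (γ n)) (S1 ∪ S2)).toReal * (2 * Cf1) + ε / 2 := by
          rw [hsplit]; exact add_le_add hpart1 hpart2
      _ ≤ (2 * ((∫ z : E × E, dist z.1 z.2 ^ 2 ∂(γ n)) / δ ^ 2)) * (2 * Cf1) + ε / 2 := by
          refine add_le_add_left (mul_le_mul_of_nonneg_right ?_ (by linarith)) _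
          exact hBbound.trans (by linarith [hγA])
      _ = K * (∫ z : E × E, dist z.1 z.2 ^ 2 ∂(γ n)) + ε / 2 := by
          rw [hKdef]; field_simp; ring
      _ ≤ K * |∫ z : E × E, dist z.1 z.2 ^ 2 ∂(γ n)| + ε / 2 :=
          add_le_add_left (mul_le_mul_of_nonneg_left (le_abs_self _) hKpos.le) _
      _ < K * (ε / 2 / K) + ε / 2 :=
          add_lt_add_left (mul_lt_mul_of_pos_left hcn hKpos) _
      _ = ε := by field_simp; ring
  -- conclude
  rw [← tendsto_sub_nhds_zero_iff]
  have hmul : Tendsto (fun j => C1 * D j) atTop (𝓝 0) := by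
    have := hDto.const_mul C1
    simpa using this
  exact squeeze_zero_norm (fun j => by
    simpa [Real.norm_eq_abs] using hdiffle j) hmul
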